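/- If M is a nonzero finitely generated graded module over the polynomial ring S = k[X_0,...,X_n] of projective dimension m, then Ext^m_S(M, S) ≠ 0. -/

import Mathlib

open CategoryTheory

universe u

/-- `Ext^i_R(M, N)` for modules over a commutative ring. -/
noncomputable abbrev extModule (R : Type u) [CommRing R] (M N : ModuleCat.{u} R) (i : ℕ) :=
  ((Ext R (ModuleCat.{u} R) i).obj (Opposite.op M)).obj N

namespace Statement0Aux

open Limits

variable {R : Type u} [CommRing R]

lemma subsingleton_of_isZero {X : ModuleCat.{u} R} (h : IsZero X) : Subsingleton X := by
  refine ⟨fun a b => ?_⟩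
  have h1 : (𝟙 X : X ⟶ X) = 0 := h.eq_of_src _ _
  calc a = (𝟙 X : X ⟶ X) a := rfl
  _ = (0 : X ⟶ X) a := by rw [h1]
  _ = (𝟙 X : X ⟶ X) b := by rw [h1]; rfl
  _ = b := rfl

lemma subsingleton_iff_isZero (X : ModuleCat.{u} R) : Subsingleton X ↔ IsZero X :=
  ⟨fun _ => ModuleCat.isZero_of_subsingleton X, subsingleton_of_isZero⟩

/-- Vanishing of `Ext` is exactness of the Hom complex of any projective resolution. -/
lemma subsing_ext_iff {A : ModuleCat.{u} R} (C : ProjectiveResolution A) (Y : ModuleCat.{u} R)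
    (n : ℕ) :
    Subsingleton (extModule R A Y n) ↔ (C.complex.linearYonedaObj R Y).ExactAt n := by
  rw [subsingleton_iff_isZero, HomologicalComplex.exactAt_iff_isZero_homology]
  exact ⟨fun h => h.of_iso (C.isoExt n Y).symm, fun h => h.of_iso (C.isoExt n Y)⟩

lemma subsing_ext_succ_of_projective (A Y : ModuleCat.{u} R) [Projective A] (n : ℕ) :
    Subsingleton (extModule R A Y (n + 1)) :=
  subsingleton_of_isZero (isZero_Ext_succ_of_projective A Y n)

lemma exactAt_succ_iff (D : CochainComplex (ModuleCat.{u} R) ℕ) (j : ℕ) :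
    D.ExactAt (j + 1) ↔ ∀ g : D.X (j + 1), D.d (j + 1) (j + 2) g = 0 →
      ∃ h : D.X j, D.d j (j + 1) h = g := by
  rw [D.exactAt_iff' j (j + 1) (j + 2) (by simp) (by simp)]
  exact (D.sc' j (j + 1) (j + 2)).moduleCat_exact_iff

lemma exactAt_zero_iff (D : CochainComplex (ModuleCat.{u} R) ℕ) :
    D.ExactAt 0 ↔ ∀ g : D.X 0, D.d 0 1 g = 0 → g = 0 := by
  rw [D.exactAt_iff' 0 0 1 (by simp) (by simp)]
  rw [(D.sc' 0 0 1).moduleCat_exact_iff]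
  have h00 : D.d 0 0 = 0 := D.shape _ _ (by simp)
  constructor
  · intro h g hg
    obtain ⟨y, hy⟩ := h g hg
    rw [show (D.sc' 0 0 1).f = D.d 0 0 from rfl, h00] at hy
    exact hy.symm ▸ rfl
  · intro h g hg
    exact ⟨0, by rw [show (D.sc' 0 0 1).f = D.d 0 0 from rfl, h00]; simp [h g hg]; rfl⟩

/-- For projective `A`, vanishing of `Ext^0(A, Y)` is vanishing of `Hom(A, Y)`. -/
lemma subsing_ext_zero_iff (A Y : ModuleCat.{u} R) [Projective A] :
    Subsingleton (extModule R A Y 0) ↔ Subsingleton (A ⟶ Y) := by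
  rw [subsing_ext_iff (ProjectiveResolution.self A) Y 0, exactAt_zero_iff]
  have hd : ∀ g : (((ChainComplex.single₀ (ModuleCat.{u} R)).obj A).linearYonedaObj R Y).X 0,
      (((ChainComplex.single₀ (ModuleCat.{u} R)).obj A).linearYonedaObj R Y).d 0 1 g = 0 := by
    intro g
    show ((ChainComplex.single₀ (ModuleCat.{u} R)).obj A).d 1 0 ≫ g = 0
    rw [HomologicalComplex.single_obj_d]; exact zero_comp
  constructor
  · intro h
    refine ⟨fun a b => ?_⟩
    have ha := h a (hd a)
    have hb := h b (hd b)
    exact ha.trans hb.symm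
  · intro h g _
    have : (g : A ⟶ Y) = (0 : A ⟶ Y) := h.elim _ _
    exact this

section SES

variable {A K F : ModuleCat.{u} R} (i : K ⟶ F) (p : F ⟶ A) (Q : ProjectiveResolution K)

/-- The augmented complex `⋯ → Q₁ → Q₀ → F` associated to `0 → K → F → A → 0`. -/
noncomputable def resComplex : ChainComplex (ModuleCat.{u} R) ℕ :=
  Q.complex.augment (Q.π.f 0 ≫ i)
    (by erw [← Category.assoc, Q.complex_d_comp_π_f_zero, zero_comp])

lemma resComplex_exactAt_succ (hi : Function.Injective i) (n : ℕ) :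
    (resComplex i Q).ExactAt (n + 1) := by
  match n with
  | 0 =>
    rw [HomologicalComplex.exactAt_iff' _ 2 1 0 (by simp) (by simp)]
    rw [ShortComplex.moduleCat_exact_iff]
    intro x hx
    have hx' : i (Q.π.f 0 x) = 0 := hx
    have h0 : Q.π.f 0 x = 0 := by
      apply hi
      exact hx'.trans (map_zero _).symm
    exact (ShortComplex.moduleCat_exact_iff _).1 Q.exact₀ x h0
  | n + 1 =>
    rw [HomologicalComplex.exactAt_iff' _ (n + 3) (n + 2) (n + 1) (by simp) (by simp)]
    have := (HomologicalComplex.exactAt_iff' Q.complex (n + 2) (n + 1) n (by simp) (by simp)).1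
      (Q.complex_exactAt_succ n)
    rw [ShortComplex.moduleCat_exact_iff] at this ⊢
    intro x hx
    exact this x hx

/-- The projective resolution of `A` obtained by augmenting a projective resolution of the
kernel of a surjection `F ⟶ A` with projective `F`. -/
noncomputable def resolution [Projective F] (hi : Function.Injective i)
    (hp : Function.Surjective p) (hip : ∀ x : F, p x = 0 ↔ ∃ y : K, i y = x) :
    ProjectiveResolution A where
  complex := resComplex i Q
  projective n := by
    match n with
    | 0 => exact (inferInstance : Projective F)
    | n + 1 => exact Q.projective n
  π := (ChainComplex.toSingle₀Equiv _ _).symm ⟨p, by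
    erw [show (resComplex i Q).d 1 0 = Q.π.f 0 ≫ i from rfl, Category.assoc]
    have hip0 : i ≫ p = 0 := by
      ext y
      exact (hip (i y)).2 ⟨y, rfl⟩
    erw [hip0, comp_zero]⟩
  quasiIso := ⟨fun n => by
    cases n with
    | zero =>
      rw [ChainComplex.quasiIsoAt₀_iff, ShortComplex.quasiIso_iff_of_zeros']
      · have hw : (resComplex i Q).d 1 0 ≫ p = 0 := by
          erw [show (resComplex i Q).d 1 0 = Q.π.f 0 ≫ i from rfl, Category.assoc]
          have hip0 : i ≫ p = 0 := by
            ext y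
            exact (hip (i y)).2 ⟨y, rfl⟩
          erw [hip0, comp_zero]
        refine (ShortComplex.exact_and_epi_g_iff_of_iso
          (?_ : _ ≅ ShortComplex.mk ((resComplex i Q).d 1 0) p hw)).2 ⟨?_, ?_⟩
        · exact ShortComplex.isoMk (Iso.refl _) (Iso.refl _) (Iso.refl _)
            (by erw [Category.id_comp]) (by simp [ChainComplex.toSingle₀Equiv]; rfl)
        · rw [ShortComplex.moduleCat_exact_iff]
          intro x hx
          obtain ⟨z, hz⟩ := (hip x).1 hx
          obtain ⟨y, hy⟩ := (ModuleCat.epi_iff_surjective (Q.π.f 0)).1 inferInstance z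
          refine ⟨y, ?_⟩
          show i (Q.π.f 0 y) = x
          rw [hy, hz]
        · exact (ModuleCat.epi_iff_surjective p).2 hp
      all_goals rfl
    | succ n =>
      rw [quasiIsoAt_iff_exactAt']
      · exact resComplex_exactAt_succ i Q hi n
      · apply ChainComplex.exactAt_succ_single_obj⟩

variable [Projective F]

include Q in
/-- Dimension shifting. -/
lemma subsing_ext_shift (hi : Function.Injective i)
    (hp : Function.Surjective p) (hip : ∀ x : F, p x = 0 ↔ ∃ y : K, i y = x)
    (Y : ModuleCat.{u} R) (l : ℕ) :
    Subsingleton (extModule R A Y (l + 2)) ↔ Subsingleton (extModule R K Y (l + 1)) := by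
  rw [subsing_ext_iff (resolution i p Q hi hp hip) Y (l + 2), subsing_ext_iff Q Y (l + 1),
    exactAt_succ_iff, exactAt_succ_iff]
  exact Iff.rfl

include Q in
/-- From vanishing of `Ext^1(A, Y)`, any map `K → Y` extends to `F`. -/
lemma ext1_extend (hi : Function.Injective i)
    (hp : Function.Surjective p) (hip : ∀ x : F, p x = 0 ↔ ∃ y : K, i y = x)
    (Y : ModuleCat.{u} R) (hsub : Subsingleton (extModule R A Y 1))
    (φ : K ⟶ Y) : ∃ ψ : F ⟶ Y, i ≫ ψ = φ := by
  have h := (subsing_ext_iff (resolution i p Q hi hp hip) Y 1).1 hsub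
  rw [exactAt_succ_iff] at h
  obtain ⟨ψ, hψ⟩ := h (Q.π.f 0 ≫ φ) (by
    show (resComplex i Q).d 2 1 ≫ (Q.π.f 0 ≫ φ) = 0
    erw [show (resComplex i Q).d 2 1 = Q.complex.d 1 0 from rfl, ← Category.assoc,
      Q.complex_d_comp_π_f_zero, zero_comp])
  have hψ' : (Q.π.f 0 ≫ i) ≫ ψ = Q.π.f 0 ≫ φ := hψ
  erw [Category.assoc] at hψ'
  exact ⟨ψ, (cancel_epi (Q.π.f 0)).1 hψ'⟩

end SES

/-- `Ext^{j+1}(A, -)` vanishing passes from `R` to finite powers of `R`. -/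
lemma subsing_ext_pi {A : ModuleCat.{u} R} (C : ProjectiveResolution A) (r j : ℕ)
    (h : Subsingleton (extModule R A (ModuleCat.of R R) (j + 1))) :
    Subsingleton (extModule R A (ModuleCat.of R (Fin r → R)) (j + 1)) := by
  rw [subsing_ext_iff C, exactAt_succ_iff] at h ⊢
  intro g hg
  have hg' : C.complex.d (j + 2) (j + 1) ≫ g = 0 := hg
  have hcomp : ∀ l : Fin r, ∃ h' : C.complex.X j ⟶ ModuleCat.of R R,
      C.complex.d (j + 1) j ≫ h' =
        g ≫ (show ModuleCat.of R (Fin r → R) ⟶ ModuleCat.of R R from ModuleCat.ofHom (LinearMap.proj l)) := by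
    intro l
    apply h
    show C.complex.d (j + 2) (j + 1) ≫
      (g ≫ (show ModuleCat.of R (Fin r → R) ⟶ ModuleCat.of R R from ModuleCat.ofHom (LinearMap.proj l))) = 0
    erw [← Category.assoc, hg', zero_comp]
  choose h' hh' using hcomp
  refine ⟨ModuleCat.ofHom (LinearMap.pi (fun l => (h' l).hom)), ?_⟩
  show C.complex.d (j + 1) j ≫ ModuleCat.ofHom (LinearMap.pi (fun l => (h' l).hom)) = g
  ext x l
  exact ConcreteCategory.congr_hom (hh' l) x

/-- `Ext^{j+1}(A, -)` vanishing passes to retracts in the second variable. -/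
lemma subsing_ext_retract {A : ModuleCat.{u} R} (C : ProjectiveResolution A)
    {Y Y' : ModuleCat.{u} R} (s : Y' ⟶ Y) (t : Y ⟶ Y') (hst : s ≫ t = 𝟙 Y') (j : ℕ)
    (h : Subsingleton (extModule R A Y (j + 1))) :
    Subsingleton (extModule R A Y' (j + 1)) := by
  rw [subsing_ext_iff C, exactAt_succ_iff] at h ⊢
  intro g hg
  obtain ⟨h0, hh0⟩ := h (g ≫ s) (by
    show C.complex.d (j + 2) (j + 1) ≫ (g ≫ s) = 0
    have hg' : C.complex.d (j + 2) (j + 1) ≫ g = 0 := hg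
    erw [← Category.assoc, hg', zero_comp])
  refine ⟨h0 ≫ t, ?_⟩
  have hh0' : C.complex.d (j + 1) j ≫ h0 = g ≫ s := hh0
  show C.complex.d (j + 1) j ≫ (h0 ≫ t) = g
  erw [← Category.assoc, hh0', Category.assoc, hst, Category.comp_id]


lemma section_of_retraction {M N : Type u} [AddCommGroup M] [AddCommGroup N] [Module R M]
    [Module R N] (p : M →ₗ[R] N) (hp : Function.Surjective p)
    (ψ : M →ₗ[R] ↥(LinearMap.ker p)) (hψ : ∀ x : LinearMap.ker p, ψ x = x) :
    ∃ u : N →ₗ[R] M, p.comp u = LinearMap.id := by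
  set θ : M →ₗ[R] M := LinearMap.id - (LinearMap.ker p).subtype.comp ψ with hθdef
  have hθ : LinearMap.ker p ≤ LinearMap.ker θ := by
    intro x hx
    have : ψ x = ⟨x, hx⟩ := hψ ⟨x, hx⟩
    simp [hθdef, LinearMap.mem_ker, this]
  have key : ∀ x : M, p (θ x) = p x := by
    intro x
    have : p ((ψ x : M)) = 0 := (ψ x).2
    simp [hθdef, this]
  let e := p.quotKerEquivOfSurjective hp
  have comp_eq : p.comp (Submodule.liftQ _ θ hθ) = (e : (M ⧸ LinearMap.ker p) →ₗ[R] N) := by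
    apply LinearMap.ext
    intro q
    obtain ⟨x, rfl⟩ := Submodule.Quotient.mk_surjective _ q
    simp [Submodule.liftQ_apply, key, e, LinearMap.quotKerEquivOfSurjective]
  refine ⟨(Submodule.liftQ _ θ hθ).comp (e.symm : N →ₗ[R] M ⧸ LinearMap.ker p), ?_⟩
  apply LinearMap.ext
  intro n
  have := LinearMap.congr_fun comp_eq (e.symm n)
  simpa using this

variable (R) in
/-- If `A` is finitely generated and `Ext^1(A, -)` vanishes, then the identity of `A` factors
through a finite free module. -/
lemma exists_section_of_ext1 (A : ModuleCat.{u} R) [Module.Finite R A]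
    (hsub : ∀ N : ModuleCat.{u} R, Subsingleton (extModule R A N 1)) :
    ∃ (r : ℕ) (p : ModuleCat.of R (Fin r → R) ⟶ A) (u : A ⟶ ModuleCat.of R (Fin r → R)),
      u ≫ p = 𝟙 A := by
  obtain ⟨r, f, hf⟩ := Module.Finite.exists_fin' R A
  let F : ModuleCat.{u} R := ModuleCat.of R (Fin r → R)
  let p : F ⟶ A := ModuleCat.ofHom f
  let K : ModuleCat.{u} R := ModuleCat.of R ↥(LinearMap.ker f)
  let i : K ⟶ F := ModuleCat.ofHom (LinearMap.ker f).subtype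
  haveI : Projective F := inferInstance
  have hi : Function.Injective i := Subtype.val_injective
  have hip : ∀ x : F, p x = 0 ↔ ∃ y : K, i y = x := fun x =>
    ⟨fun h => ⟨⟨x, h⟩, rfl⟩, fun ⟨y, hy⟩ => hy ▸ y.2⟩
  obtain ⟨ψ, hψ⟩ := ext1_extend i p (ProjectiveResolution.of K) hi hf hip K (hsub K) (𝟙 K)
  obtain ⟨u, hu⟩ := section_of_retraction f hf ψ.hom (fun x => ConcreteCategory.congr_hom hψ x)
  exact ⟨r, p, ModuleCat.ofHom u, ModuleCat.hom_ext hu⟩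

lemma projective_of_section {A : ModuleCat.{u} R} {r : ℕ}
    (p : ModuleCat.of R (Fin r → R) ⟶ A) (u : A ⟶ ModuleCat.of R (Fin r → R))
    (hu : u ≫ p = 𝟙 A) : Projective A := by
  haveI : Module.Projective R ↑(ModuleCat.of R (Fin r → R)) :=
    (inferInstance : Module.Projective R (Fin r → R))
  have : Module.Projective R A :=
    Module.Projective.of_split u.hom p.hom (congrArg ModuleCat.Hom.hom hu)
  exact inferInstance

lemma exists_nonzero_hom {A : ModuleCat.{u} R} [Nontrivial A] {r : ℕ}
    (p : ModuleCat.of R (Fin r → R) ⟶ A) (u : A ⟶ ModuleCat.of R (Fin r → R))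
    (hu : u ≫ p = 𝟙 A) (hs : Subsingleton (A ⟶ ModuleCat.of R R)) : False := by
  obtain ⟨a, ha⟩ := exists_ne (0 : A)
  have hco : ∀ l : Fin r, u a l = 0 := by
    intro l
    have h0 : (u ≫ (show ModuleCat.of R (Fin r → R) ⟶ ModuleCat.of R R from ModuleCat.ofHom (LinearMap.proj l)))
        = 0 := hs.elim _ _
    exact ConcreteCategory.congr_hom h0 a
  have hua : u a = 0 := funext hco
  have : a = 0 := by
    have h1 : p (u a) = a := ConcreteCategory.congr_hom hu a
    rw [hua, map_zero] at h1
    exact h1.symm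
  exact ha this

variable (R) in
lemma key [IsNoetherianRing R] : ∀ (m : ℕ) (A : ModuleCat.{u} R), Module.Finite R A →
    Nontrivial A →
    (∀ j, m < j → ∀ N : ModuleCat.{u} R, Subsingleton (extModule R A N j)) →
    (∀ m', m' < m → ∃ N : ModuleCat.{u} R, ¬ Subsingleton (extModule R A N (m' + 1))) →
    ¬ Subsingleton (extModule R A (ModuleCat.of R R) m) := by
  intro m
  induction m with
  | zero =>
    intro A hfin hnt hle _hgt hcontra
    haveI := hfin; haveI := hnt
    obtain ⟨r, p, u, hu⟩ := exists_section_of_ext1 R A (fun N => hle 1 Nat.zero_lt_one N)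
    haveI : Projective A := projective_of_section p u hu
    exact exists_nonzero_hom p u hu ((subsing_ext_zero_iff A _).1 hcontra)
  | succ m IH =>
    intro A hfin hnt hle hgt hcontra
    haveI := hfin; haveI := hnt
    obtain ⟨r, f, hf⟩ := Module.Finite.exists_fin' R A
    let F : ModuleCat.{u} R := ModuleCat.of R (Fin r → R)
    let p : F ⟶ A := ModuleCat.ofHom f
    let K : ModuleCat.{u} R := ModuleCat.of R ↥(LinearMap.ker f)
    let i : K ⟶ F := ModuleCat.ofHom (LinearMap.ker f).subtype
    haveI : Projective F := inferInstance
    have hi : Function.Injective i := Subtype.val_injective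
    have hip : ∀ x : F, p x = 0 ↔ ∃ y : K, i y = x := fun x =>
      ⟨fun h => ⟨⟨x, h⟩, rfl⟩, fun ⟨y, hy⟩ => hy ▸ y.2⟩
    by_cases hK : Nontrivial K
    · haveI := hK
      haveI : Module.Finite R K := Module.Finite.iff_fg.mpr (IsNoetherian.noetherian _)
      set Q := ProjectiveResolution.of K with hQ
      have shift : ∀ (Y : ModuleCat.{u} R) (l : ℕ),
          Subsingleton (extModule R A Y (l + 2)) ↔ Subsingleton (extModule R K Y (l + 1)) :=
        fun Y l => subsing_ext_shift i p Q hi hf hip Y l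
      cases m with
      | zero =>
        -- `K` is projective, hence a retract of a finite free module
        have hKproj : ∀ N : ModuleCat.{u} R, Subsingleton (extModule R K N 1) :=
          fun N => (shift N 0).1 (hle 2 (by omega) N)
        obtain ⟨rK, pK, uK, huK⟩ := exists_section_of_ext1 R K hKproj
        have h1 := subsing_ext_pi (ProjectiveResolution.of A) rK 0 hcontra
        have h2 := subsing_ext_retract (ProjectiveResolution.of A) uK pK huK 0 h1
        obtain ⟨ψ, hψ⟩ := ext1_extend i p Q hi hf hip K h2 (𝟙 K)
        obtain ⟨u, hu⟩ := section_of_retraction f hf ψ.hom (fun x => ConcreteCategory.congr_hom hψ x)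
        haveI : Projective A := projective_of_section p (ModuleCat.ofHom u : A ⟶ F) (ModuleCat.hom_ext hu)
        obtain ⟨N, hN⟩ := hgt 0 (by omega)
        exact hN (subsing_ext_succ_of_projective A N 0)
      | succ m' =>
        have hleK : ∀ j, m' + 1 < j → ∀ N : ModuleCat.{u} R,
            Subsingleton (extModule R K N j) := by
          intro j hj N
          match j, hj with
          | j' + 1, hj => exact (shift N j').1 (hle (j' + 2) (by omega) N)
        have hgtK : ∀ m'', m'' < m' + 1 → ∃ N : ModuleCat.{u} R,
            ¬ Subsingleton (extModule R K N (m'' + 1)) := by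
          intro m'' hm
          obtain ⟨N, hN⟩ := hgt (m'' + 1) (by omega)
          exact ⟨N, fun hsub => hN ((shift N m'').2 hsub)⟩
        exact IH K ‹_› ‹_› hleK hgtK ((shift (ModuleCat.of R R) m').1 hcontra)
    · -- `K` is trivial, so `A` is free, contradicting `hgt 0`
      have hinj : Function.Injective f := by
        rw [← LinearMap.ker_eq_bot]
        by_contra hne
        exact hK ((Submodule.nontrivial_iff_ne_bot).2 hne)
      have : Module.Projective R A :=
        Module.Projective.of_equiv (LinearEquiv.ofBijective f ⟨hinj, hf⟩)
      haveI : Projective A := inferInstance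
      obtain ⟨N, hN⟩ := hgt 0 (Nat.succ_pos m)
      exact hN (subsing_ext_succ_of_projective A N 0)

end Statement0Aux

/-- If `M` is a nonzero finitely generated graded module over the polynomial
ring `S = k[X_0, …, X_n]` of projective dimension `m`, then `Ext^m_S(M, S) ≠ 0`.
Here "projective dimension `m`" is expressed by the standard characterization via
vanishing of Ext: `Ext^{j}(M, −) = 0` for all `j > m`, and for every `m' < m` there is
some module `N` with `Ext^{m'+1}(M, N) ≠ 0`. -/
theorem statement0 {k : Type u} [Field k] (n : ℕ)
    (M : Type u) [AddCommGroup M] [Module (MvPolynomial (Fin (n + 1)) k) M]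
    -- `M` is graded: a decomposition into homogeneous components, compatible with the
    -- standard grading of `S = k[X_0, …, X_n]`
    (ℳ : ℤ → AddSubgroup M) [DirectSum.Decomposition ℳ]
    (hgradeX : ∀ (i : Fin (n + 1)) (d : ℤ), ∀ x ∈ ℳ d,
      (MvPolynomial.X i : MvPolynomial (Fin (n + 1)) k) • x ∈ ℳ (d + 1))
    (hgradeC : ∀ (c : k) (d : ℤ), ∀ x ∈ ℳ d,
      (MvPolynomial.C c : MvPolynomial (Fin (n + 1)) k) • x ∈ ℳ d)
    -- `M` is finitely generated and nonzero
    [Module.Finite (MvPolynomial (Fin (n + 1)) k) M] (hM : Nontrivial M)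
    -- `M` has projective dimension `m`
    (m : ℕ)
    (hpdle : ∀ (j : ℕ), m < j → ∀ N : ModuleCat.{u} (MvPolynomial (Fin (n + 1)) k),
      Subsingleton (extModule _ (ModuleCat.of _ M) N j))
    (hpdgt : ∀ m' : ℕ, m' < m → ∃ N : ModuleCat.{u} (MvPolynomial (Fin (n + 1)) k),
      ¬ Subsingleton (extModule _ (ModuleCat.of _ M) N (m' + 1))) :
    ¬ Subsingleton
      (extModule (MvPolynomial (Fin (n + 1)) k) (ModuleCat.of _ M)
        (ModuleCat.of _ (MvPolynomial (Fin (n + 1)) k)) m) := by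
  have hfin : Module.Finite (MvPolynomial (Fin (n + 1)) k)
      ↑(ModuleCat.of (MvPolynomial (Fin (n + 1)) k) M) := ‹Module.Finite _ M›
  have hnt : Nontrivial ↑(ModuleCat.of (MvPolynomial (Fin (n + 1)) k) M) := hM
  exact Statement0Aux.key (MvPolynomial (Fin (n + 1)) k) m
    (ModuleCat.of (MvPolynomial (Fin (n + 1)) k) M) hfin hnt hpdle hpdgt
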